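/- Let f ∈ Diff^1(M) on a compact surface and let μ be an f-invariant probability measure (not necessarily ergodic) such that λ⁺(f,x) > λ⁻(f,x) for μ-a.e. x. Then every f̂-invariant lift μ̂ of μ is carried by graph(E⁺) ∪ graph(E⁻), and there are unique f̂-invariant lifts μ̂⁺, μ̂⁻ with μ̂⁺(graph(E⁺)) = 1 and μ̂⁻(graph(E⁻)) = 1. -/
import Mathlib


open MeasureTheory Filter Topology Set

private lemma lift_eq_map {X Xh : Type*} [MeasurableSpace X] [MeasurableSpace Xh]
    (π : Xh → X) (hπm : Measurable π) (E : X → Xh) (hEm : Measurable E)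
    (μ : Measure X)
    (hS : MeasurableSet {y : Xh | y = E (π y)})
    (ν : Measure Xh) [IsProbabilityMeasure ν]
    (hνπ : Measure.map π ν = μ) (hν1 : ν {y : Xh | y = E (π y)} = 1) :
    ν = μ.map E := by
  have hSc : ν {y : Xh | y = E (π y)}ᶜ = 0 := by
    rw [prob_compl_eq_zero_iff hS]; exact hν1
  ext A hA
  have h1 : A ∩ {y : Xh | y = E (π y)} = (π ⁻¹' (E ⁻¹' A)) ∩ {y : Xh | y = E (π y)} := by
    ext y
    simp only [mem_inter_iff, mem_setOf_eq, mem_preimage]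
    constructor
    · rintro ⟨hyA, hy⟩; exact ⟨by rwa [← hy], hy⟩
    · rintro ⟨hyA, hy⟩; exact ⟨by rwa [hy], hy⟩
  calc ν A = ν (A ∩ {y : Xh | y = E (π y)}) := (measure_inter_conull hSc).symm
    _ = ν ((π ⁻¹' (E ⁻¹' A)) ∩ {y : Xh | y = E (π y)}) := by rw [h1]
    _ = ν (π ⁻¹' (E ⁻¹' A)) := measure_inter_conull hSc
    _ = (Measure.map π ν) (E ⁻¹' A) := (Measure.map_apply hπm (hEm hA)).symm
    _ = μ (E ⁻¹' A) := by rw [hνπ]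
    _ = (μ.map E) A := (Measure.map_apply hEm hA).symm

private lemma exists_unique_lift {X Xh : Type*} [MeasurableSpace X] [MeasurableSpace Xh]
    [TopologicalSpace X] [TopologicalSpace Xh] [BorelSpace X] [BorelSpace Xh]
    (π : Xh → X) (hπm : Measurable π)
    (f : X ≃ₜ X) (fh : Xh ≃ₜ Xh)
    (μ : Measure X) [IsProbabilityMeasure μ] (hinv : MeasurePreserving f μ μ)
    (E : X → Xh) (hEm : Measurable E) (hEsec : π ∘ E = id)
    (hS : MeasurableSet {y : Xh | y = E (π y)})
    (heq : ∀ᵐ x ∂μ, fh (E x) = E (f x)) :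
    ∃! μhp : Measure Xh, IsProbabilityMeasure μhp ∧ MeasurePreserving fh μhp μhp ∧
        Measure.map π μhp = μ ∧ μhp {y : Xh | y = E (π y)} = 1 := by
  have hfhm : Measurable fh := fh.continuous.measurable
  refine ⟨μ.map E, ⟨?_, ?_, ?_, ?_⟩, ?_⟩
  · exact Measure.isProbabilityMeasure_map hEm.aemeasurable
  · refine ⟨hfhm, ?_⟩
    calc Measure.map fh (μ.map E) = μ.map (fh ∘ E) := Measure.map_map hfhm hEm
      _ = μ.map (E ∘ f) := Measure.map_congr heq
      _ = Measure.map E (Measure.map f μ) := (Measure.map_map hEm f.continuous.measurable).symm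
      _ = μ.map E := by rw [hinv.map_eq]
  · rw [Measure.map_map hπm hEm, hEsec, Measure.map_id]
  · have hpre : E ⁻¹' {y : Xh | y = E (π y)} = univ := by
      ext x
      simp only [mem_preimage, mem_setOf_eq, mem_univ, iff_true]
      rw [show π (E x) = x from congrFun hEsec x]
    rw [Measure.map_apply hEm hS, hpre, measure_univ]
  · rintro ν ⟨hν1, _, hν3, hν4⟩
    exact lift_eq_map π hπm E hEm μ hS ν hν3 hν4

private lemma carried_lemma {X Xh : Type*}
    [MetricSpace X] [CompactSpace X] [MeasurableSpace X] [BorelSpace X]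
    [MetricSpace Xh] [CompactSpace Xh] [MeasurableSpace Xh] [BorelSpace Xh]
    (π : Xh → X) (hπc : Continuous π)
    (f : X ≃ₜ X) (fh : Xh ≃ₜ Xh) (hcomm : π ∘ fh = f ∘ π)
    (φ : Xh → ℝ) (hφ : Continuous φ)
    (μ : Measure X) [IsProbabilityMeasure μ]
    (Ep Em : X → Xh) (hEpm : Measurable Ep) (hEmm : Measurable Em)
    (lp lm : X → ℝ)
    (hae : ∀ᵐ x ∂μ,
      lm x < lp x ∧
      fh (Ep x) = Ep (f x) ∧ fh (Em x) = Em (f x) ∧ Ep x ≠ Em x ∧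
      (∀ y : Xh, π y = x → y ≠ Em x →
        Tendsto (fun n : ℕ => (∑ k ∈ Finset.range n, φ (fh^[k] y)) / n)
          atTop (𝓝 (lp x))) ∧
      (∀ y : Xh, π y = x → y ≠ Ep x →
        Tendsto (fun n : ℕ => (∑ k ∈ Finset.range n, φ (fh.symm^[k + 1] y)) / n)
          atTop (𝓝 (lm x))))
    (μh : Measure Xh) [IsProbabilityMeasure μh] (hpres : MeasurePreserving fh μh μh)
    (hlift : Measure.map π μh = μ) :
    μh {y | y = Ep (π y) ∨ y = Em (π y)} = 1 := by
  have hπm : Measurable π := hπc.measurable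
  have hfhm : Measurable fh := fh.continuous.measurable
  have hfsm : Measurable fh.symm := fh.symm.continuous.measurable
  have hSp : MeasurableSet {y : Xh | y = Ep (π y)} :=
    (measurable_id.prodMk (hEpm.comp hπm)) isClosed_diagonal.measurableSet
  have hSm : MeasurableSet {y : Xh | y = Em (π y)} :=
    (measurable_id.prodMk (hEmm.comp hπm)) isClosed_diagonal.measurableSet
  set B : Set Xh := {y : Xh | ¬ y = Ep (π y) ∧ ¬ y = Em (π y)} with hBdef
  have hBmeas : MeasurableSet B := (hSp.compl).inter (hSm.compl)
  have hqmp : Measure.QuasiMeasurePreserving π μh μ :=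
    ⟨hπm, by rw [hlift]⟩
  have hgood := hqmp.ae hae
  -- invariance of B a.e.
  have hiffB : ∀ᵐ y ∂μh, (fh y ∈ B ↔ y ∈ B) := by
    filter_upwards [hgood] with y hy
    obtain ⟨-, hp, hm, -, -, -⟩ := hy
    have hπfh : π (fh y) = f (π y) := congrFun hcomm y
    have e1 : fh y = Ep (π (fh y)) ↔ y = Ep (π y) := by
      rw [hπfh, ← hp]; exact fh.injective.eq_iff
    have e2 : fh y = Em (π (fh y)) ↔ y = Em (π y) := by
      rw [hπfh, ← hm]; exact fh.injective.eq_iff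
    simp only [hBdef, mem_setOf_eq, e1, e2]
  have hiterF : ∀ k : ℕ, ∀ᵐ y ∂μh, (fh^[k] y ∈ B ↔ y ∈ B) := by
    intro k; induction k with
    | zero => simp
    | succ k ih =>
      have h2 : ∀ᵐ y ∂μh, (fh (fh^[k] y) ∈ B ↔ fh^[k] y ∈ B) :=
        (hpres.iterate k).quasiMeasurePreserving.ae hiffB
      filter_upwards [ih, h2] with y h1 h2
      rw [Function.iterate_succ_apply']
      exact h2.trans h1
  have hsymm : MeasurePreserving fh.symm μh μh := by
    refine ⟨hfsm, ?_⟩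
    have h1 : Measure.map fh.symm (Measure.map fh μh) = μh := by
      rw [Measure.map_map hfsm hfhm, fh.symm_comp_self, Measure.map_id]
    calc Measure.map fh.symm μh = Measure.map fh.symm (Measure.map fh μh) := by
          rw [hpres.map_eq]
      _ = μh := h1
  have hiffBs : ∀ᵐ y ∂μh, (fh.symm y ∈ B ↔ y ∈ B) := by
    have h := hsymm.quasiMeasurePreserving.ae hiffB
    filter_upwards [h] with y h
    rw [fh.apply_symm_apply] at h; exact h.symm
  have hiterB : ∀ k : ℕ, ∀ᵐ y ∂μh, (fh.symm^[k] y ∈ B ↔ y ∈ B) := by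
    intro k; induction k with
    | zero => simp
    | succ k ih =>
      have h2 : ∀ᵐ y ∂μh, (fh.symm (fh.symm^[k] y) ∈ B ↔ fh.symm^[k] y ∈ B) :=
        (hsymm.iterate k).quasiMeasurePreserving.ae hiffBs
      filter_upwards [ih, h2] with y h1 h2
      rw [Function.iterate_succ_apply']
      exact h2.trans h1
  have hall : ∀ᵐ y ∂μh, (∀ k : ℕ, fh^[k] y ∈ B ↔ y ∈ B) ∧
      (∀ k : ℕ, fh.symm^[k] y ∈ B ↔ y ∈ B) := (ae_all_iff.2 hiterF).and (ae_all_iff.2 hiterB)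
  -- bound
  obtain ⟨C₀, hC₀⟩ := IsCompact.exists_bound_of_continuousOn isCompact_univ hφ.continuousOn
  set C : ℝ := max C₀ 0 with hCdef
  have hC0 : 0 ≤ C := le_max_right _ _
  have hC : ∀ y, |φ y| ≤ C := fun y =>
    le_trans (by simpa using hC₀ y (mem_univ y)) (le_max_left _ _)
  set ψ : Xh → ℝ := B.indicator φ with hψdef
  have hψm : Measurable ψ := hφ.measurable.indicator hBmeas
  have hψb : ∀ y, |ψ y| ≤ C := by
    intro y
    by_cases hy : y ∈ B
    · rw [hψdef, indicator_of_mem hy]; exact hC y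
    · rw [hψdef, indicator_of_notMem hy]; simpa using hC0
  have hintk : ∀ g : Xh → Xh, Measurable g → Integrable (fun y => ψ (g y)) μh := by
    intro g hg
    refine ⟨(hψm.comp hg).aestronglyMeasurable, ?_⟩
    exact HasFiniteIntegral.of_bounded (C := C)
      (Eventually.of_forall fun y => by simpa [Real.norm_eq_abs] using hψb (g y))
  -- integral invariance
  have hcompF : ∀ k : ℕ, ∫ y, ψ (fh^[k] y) ∂μh = ∫ y, ψ y ∂μh := by
    intro k
    calc ∫ y, ψ (fh^[k] y) ∂μh
        = ∫ y, ψ y ∂(Measure.map (fh^[k]) μh) :=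
          (integral_map ((hpres.iterate k).measurable.aemeasurable)
            hψm.aestronglyMeasurable).symm
      _ = ∫ y, ψ y ∂μh := by rw [(hpres.iterate k).map_eq]
  have hcompB : ∀ k : ℕ, ∫ y, ψ (fh.symm^[k + 1] y) ∂μh = ∫ y, ψ y ∂μh := by
    intro k
    calc ∫ y, ψ (fh.symm^[k + 1] y) ∂μh
        = ∫ y, ψ y ∂(Measure.map (fh.symm^[k + 1]) μh) :=
          (integral_map ((hsymm.iterate (k + 1)).measurable.aemeasurable)
            hψm.aestronglyMeasurable).symm
      _ = ∫ y, ψ y ∂μh := by rw [(hsymm.iterate (k + 1)).map_eq]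
  -- averages
  set An : ℕ → Xh → ℝ := fun n y => (∑ k ∈ Finset.range n, ψ (fh^[k] y)) / n with hAndef
  set Cn : ℕ → Xh → ℝ := fun n y => (∑ k ∈ Finset.range n, ψ (fh.symm^[k + 1] y)) / n
    with hCndef
  have hAnm : ∀ n, Measurable (An n) := by
    intro n
    exact (Finset.measurable_sum _ fun k _ => hψm.comp (hpres.iterate k).measurable).div_const _
  have hCnm : ∀ n, Measurable (Cn n) := by
    intro n
    exact (Finset.measurable_sum _ fun k _ => hψm.comp (hsymm.iterate (k + 1)).measurable).div_const _
  have habs : ∀ (n : ℕ) (g : ℕ → ℝ), (∀ k, |g k| ≤ C) →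
      |(∑ k ∈ Finset.range n, g k) / n| ≤ C := by
    intro n g hg
    rcases Nat.eq_zero_or_pos n with h | h
    · simpa [h] using hC0
    · rw [abs_div, Nat.abs_cast, div_le_iff₀ (by exact_mod_cast h)]
      calc |∑ k ∈ Finset.range n, g k| ≤ ∑ k ∈ Finset.range n, |g k| :=
            Finset.abs_sum_le_sum_abs _ _
        _ ≤ ∑ _k ∈ Finset.range n, C := Finset.sum_le_sum fun k _ => hg k
        _ = n * C := by simp [mul_comm]
        _ = C * n := mul_comm _ _
  have hAnb : ∀ n y, |An n y| ≤ C := fun n y => habs n _ fun k => hψb _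
  have hCnb : ∀ n y, |Cn n y| ≤ C := fun n y => habs n _ fun k => hψb _
  -- integrals of averages
  have hAint : ∀ n : ℕ, 1 ≤ n → ∫ y, An n y ∂μh = ∫ y, ψ y ∂μh := by
    intro n hn
    have h1 : ∫ y, (∑ k ∈ Finset.range n, ψ (fh^[k] y)) ∂μh
        = ∑ k ∈ Finset.range n, ∫ y, ψ (fh^[k] y) ∂μh :=
      integral_finset_sum _ fun k _ => hintk _ (hpres.iterate k).measurable
    have h2 : ∑ k ∈ Finset.range n, ∫ y, ψ (fh^[k] y) ∂μh
        = n * ∫ y, ψ y ∂μh := by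
      rw [Finset.sum_congr rfl fun k _ => hcompF k]; simp [mul_comm]
    have hne : (n : ℝ) ≠ 0 := Nat.cast_ne_zero.mpr (Nat.one_le_iff_ne_zero.mp hn)
    simp only [hAndef, integral_div]
    rw [h1, h2]
    exact mul_div_cancel_left₀ _ hne
  have hCint : ∀ n : ℕ, 1 ≤ n → ∫ y, Cn n y ∂μh = ∫ y, ψ y ∂μh := by
    intro n hn
    have h1 : ∫ y, (∑ k ∈ Finset.range n, ψ (fh.symm^[k + 1] y)) ∂μh
        = ∑ k ∈ Finset.range n, ∫ y, ψ (fh.symm^[k + 1] y) ∂μh :=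
      integral_finset_sum _ fun k _ => hintk _ (hsymm.iterate (k + 1)).measurable
    have h2 : ∑ k ∈ Finset.range n, ∫ y, ψ (fh.symm^[k + 1] y) ∂μh
        = n * ∫ y, ψ y ∂μh := by
      rw [Finset.sum_congr rfl fun k _ => hcompB k]; simp [mul_comm]
    have hne : (n : ℝ) ≠ 0 := Nat.cast_ne_zero.mpr (Nat.one_le_iff_ne_zero.mp hn)
    simp only [hCndef, integral_div]
    rw [h1, h2]
    exact mul_div_cancel_left₀ _ hne
  -- limits
  set L : Xh → ℝ := B.indicator (fun y => lp (π y)) with hLdef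
  set M : Xh → ℝ := B.indicator (fun y => lm (π y)) with hMdef
  have hAconv : ∀ᵐ y ∂μh, Tendsto (fun n => An n y) atTop (𝓝 (L y)) := by
    filter_upwards [hall, hgood] with y hy hP
    obtain ⟨hF, _⟩ := hy
    by_cases hyB : y ∈ B
    · rw [hLdef, indicator_of_mem hyB]
      have hsum : ∀ n, An n y = (∑ k ∈ Finset.range n, φ (fh^[k] y)) / n := by
        intro n
        simp only [hAndef]
        congr 1
        exact Finset.sum_congr rfl fun k _ => indicator_of_mem ((hF k).2 hyB) φ
      obtain ⟨-, -, -, -, hfwd, -⟩ := hP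
      exact Tendsto.congr (fun n => (hsum n).symm) (hfwd y rfl hyB.2)
    · rw [hLdef, indicator_of_notMem hyB]
      have hz : ∀ n, An n y = 0 := by
        intro n
        simp only [hAndef]
        rw [Finset.sum_eq_zero fun k _ =>
          indicator_of_notMem (fun h => hyB ((hF k).1 h)) φ, zero_div]
      exact Tendsto.congr (fun n => (hz n).symm) tendsto_const_nhds
  have hCconv : ∀ᵐ y ∂μh, Tendsto (fun n => Cn n y) atTop (𝓝 (M y)) := by
    filter_upwards [hall, hgood] with y hy hP
    obtain ⟨_, hBk⟩ := hy
    by_cases hyB : y ∈ B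
    · rw [hMdef, indicator_of_mem hyB]
      have hsum : ∀ n, Cn n y = (∑ k ∈ Finset.range n, φ (fh.symm^[k + 1] y)) / n := by
        intro n
        simp only [hCndef]
        congr 1
        exact Finset.sum_congr rfl fun k _ => indicator_of_mem ((hBk (k + 1)).2 hyB) φ
      obtain ⟨-, -, -, -, -, hbwd⟩ := hP
      exact Tendsto.congr (fun n => (hsum n).symm) (hbwd y rfl hyB.1)
    · rw [hMdef, indicator_of_notMem hyB]
      have hz : ∀ n, Cn n y = 0 := by
        intro n
        simp only [hCndef]
        rw [Finset.sum_eq_zero fun k _ =>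
          indicator_of_notMem (fun h => hyB ((hBk (k + 1)).1 h)) φ, zero_div]
      exact Tendsto.congr (fun n => (hz n).symm) tendsto_const_nhds
  -- dominated convergence
  have hDCTL : Tendsto (fun n => ∫ y, An n y ∂μh) atTop (𝓝 (∫ y, L y ∂μh)) := by
    refine tendsto_integral_of_dominated_convergence (fun _ => C)
      (fun n => (hAnm n).aestronglyMeasurable) (integrable_const C)
      (fun n => Eventually.of_forall fun y => ?_) hAconv
    simpa [Real.norm_eq_abs] using hAnb n y
  have hDCTM : Tendsto (fun n => ∫ y, Cn n y ∂μh) atTop (𝓝 (∫ y, M y ∂μh)) := by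
    refine tendsto_integral_of_dominated_convergence (fun _ => C)
      (fun n => (hCnm n).aestronglyMeasurable) (integrable_const C)
      (fun n => Eventually.of_forall fun y => ?_) hCconv
    simpa [Real.norm_eq_abs] using hCnb n y
  have hLI : ∫ y, L y ∂μh = ∫ y, ψ y ∂μh := by
    have hconst : Tendsto (fun n => ∫ y, An n y ∂μh) atTop (𝓝 (∫ y, ψ y ∂μh)) := by
      refine Tendsto.congr' ?_ tendsto_const_nhds
      filter_upwards [eventually_ge_atTop 1] with n hn
      exact (hAint n hn).symm
    exact tendsto_nhds_unique hDCTL hconst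
  have hMI : ∫ y, M y ∂μh = ∫ y, ψ y ∂μh := by
    have hconst : Tendsto (fun n => ∫ y, Cn n y ∂μh) atTop (𝓝 (∫ y, ψ y ∂μh)) := by
      refine Tendsto.congr' ?_ tendsto_const_nhds
      filter_upwards [eventually_ge_atTop 1] with n hn
      exact (hCint n hn).symm
    exact tendsto_nhds_unique hDCTM hconst
  -- integrability of L, M
  have hLmeas : AEStronglyMeasurable L μh :=
    aestronglyMeasurable_of_tendsto_ae atTop (fun n => (hAnm n).aestronglyMeasurable) hAconv
  have hMmeas : AEStronglyMeasurable M μh :=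
    aestronglyMeasurable_of_tendsto_ae atTop (fun n => (hCnm n).aestronglyMeasurable) hCconv
  have hLb : ∀ᵐ y ∂μh, ‖L y‖ ≤ C := by
    filter_upwards [hAconv] with y hy
    rw [Real.norm_eq_abs]
    exact le_of_tendsto hy.abs (Eventually.of_forall fun n => hAnb n y)
  have hMb : ∀ᵐ y ∂μh, ‖M y‖ ≤ C := by
    filter_upwards [hCconv] with y hy
    rw [Real.norm_eq_abs]
    exact le_of_tendsto hy.abs (Eventually.of_forall fun n => hCnb n y)
  have hLint : Integrable L μh := ⟨hLmeas, HasFiniteIntegral.of_bounded hLb⟩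
  have hMint : Integrable M μh := ⟨hMmeas, HasFiniteIntegral.of_bounded hMb⟩
  -- conclude
  have hnonneg : 0 ≤ᵐ[μh] fun y => L y - M y := by
    filter_upwards [hgood] with y hP
    by_cases hyB : y ∈ B
    · rw [Pi.zero_apply, hLdef, hMdef, indicator_of_mem hyB, indicator_of_mem hyB]
      have := hP.1
      linarith [sub_nonneg.mpr this.le]
    · rw [Pi.zero_apply, hLdef, hMdef, indicator_of_notMem hyB, indicator_of_notMem hyB]
      simp
  have hzero : ∫ y, (L y - M y) ∂μh = 0 := by
    rw [integral_sub hLint hMint, hLI, hMI, sub_self]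
  have haezero : (fun y => L y - M y) =ᵐ[μh] 0 :=
    (integral_eq_zero_iff_of_nonneg_ae hnonneg (hLint.sub hMint)).1 hzero
  have hBnull : ∀ᵐ y ∂μh, y ∉ B := by
    filter_upwards [haezero, hgood] with y h0 hP
    intro hyB
    rw [Pi.zero_apply, hLdef, hMdef, indicator_of_mem hyB, indicator_of_mem hyB] at h0
    have := hP.1
    linarith
  have hG : MeasurableSet {y : Xh | y = Ep (π y) ∨ y = Em (π y)} := hSp.union hSm
  rw [← prob_compl_eq_zero_iff hG]
  have hcompl : {y : Xh | y = Ep (π y) ∨ y = Em (π y)}ᶜ = B := by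
    ext y; simp [hBdef, not_or]
  rw [hcompl]
  exact measure_eq_zero_iff_ae_notMem.2 hBnull

/-- Let `f ∈ Diff¹(M)` on a compact surface and let `μ` be an
`f`-invariant probability measure (not necessarily ergodic) such that
`λ⁺(f,x) > λ⁻(f,x)` for `μ`-a.e. `x`.  The projective tangent bundle is presented
as a compact metric space `Xh` with projection `π` and canonical lift `fh` (a
homeomorphism with `π ∘ fh = f ∘ π`); `φ(x,E) = log‖Df_x|_E‖`; the Oseledets
sections `Ep, Em : X → Xh` record the graphs of `E⁺, E⁻`, are `fh`-equivariant
and distinct a.e., and the pointwise exponents `lp x = λ⁺(f,x) > λ⁻(f,x) = lm x`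
are characterized a.e. by the Oseledets dichotomy: along any fiber point other
than `Em x` the forward Birkhoff averages of `φ` converge to `lp x`, and along
any fiber point other than `Ep x` the backward Birkhoff averages converge to
`lm x`.  Then every `fh`-invariant lift `μh` of `μ` is carried by
`graph(E⁺) ∪ graph(E⁻)`, and there are unique `fh`-invariant lifts `μ̂⁺, μ̂⁻`
with `μ̂⁺(graph(E⁺)) = 1` and `μ̂⁻(graph(E⁻)) = 1`. -/
theorem statement5
    {X Xh : Type*} [MetricSpace X] [CompactSpace X] [MeasurableSpace X] [BorelSpace X]
    [MetricSpace Xh] [CompactSpace Xh] [MeasurableSpace Xh] [BorelSpace Xh]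
    (π : Xh → X) (hπc : Continuous π) (hπs : Function.Surjective π)
    (f : X ≃ₜ X) (fh : Xh ≃ₜ Xh) (hcomm : π ∘ fh = f ∘ π)
    (φ : Xh → ℝ) (hφ : Continuous φ)
    (μ : Measure X) [IsProbabilityMeasure μ] (hinv : MeasurePreserving f μ μ)
    (Ep Em : X → Xh) (hEpm : Measurable Ep) (hEmm : Measurable Em)
    (hEpsec : π ∘ Ep = id) (hEmsec : π ∘ Em = id)
    (lp lm : X → ℝ)
    (hae : ∀ᵐ x ∂μ,
      lm x < lp x ∧
      fh (Ep x) = Ep (f x) ∧ fh (Em x) = Em (f x) ∧ Ep x ≠ Em x ∧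
      (∀ y : Xh, π y = x → y ≠ Em x →
        Tendsto (fun n : ℕ => (∑ k ∈ Finset.range n, φ (fh^[k] y)) / n)
          atTop (𝓝 (lp x))) ∧
      (∀ y : Xh, π y = x → y ≠ Ep x →
        Tendsto (fun n : ℕ => (∑ k ∈ Finset.range n, φ (fh.symm^[k + 1] y)) / n)
          atTop (𝓝 (lm x)))) :
    (∀ μh : Measure Xh, IsProbabilityMeasure μh → MeasurePreserving fh μh μh →
        Measure.map π μh = μ →
        μh {y | y = Ep (π y) ∨ y = Em (π y)} = 1) ∧
    (∃! μhp : Measure Xh, IsProbabilityMeasure μhp ∧ MeasurePreserving fh μhp μhp ∧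
        Measure.map π μhp = μ ∧ μhp {y | y = Ep (π y)} = 1) ∧
    (∃! μhm : Measure Xh, IsProbabilityMeasure μhm ∧ MeasurePreserving fh μhm μhm ∧
        Measure.map π μhm = μ ∧ μhm {y | y = Em (π y)} = 1) := by
  have hπm : Measurable π := hπc.measurable
  have hSp : MeasurableSet {y : Xh | y = Ep (π y)} :=
    (measurable_id.prodMk (hEpm.comp hπm)) isClosed_diagonal.measurableSet
  have hSm : MeasurableSet {y : Xh | y = Em (π y)} :=
    (measurable_id.prodMk (hEmm.comp hπm)) isClosed_diagonal.measurableSet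
  refine ⟨?_, ?_, ?_⟩
  · intro μh h1 h2 h3
    haveI := h1
    exact carried_lemma π hπc f fh hcomm φ hφ μ Ep Em hEpm hEmm lp lm hae μh h2 h3
  · exact exists_unique_lift π hπm f fh μ hinv Ep hEpm hEpsec hSp
      (by filter_upwards [hae] with x hx; exact hx.2.1)
  · exact exists_unique_lift π hπm f fh μ hinv Em hEmm hEmsec hSm
      (by filter_upwards [hae] with x hx; exact hx.2.2.1)
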